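/- Let n, d ≥ 1, χ ≥ 1, and let W ∈ ℝ^{n×n} satisfy W·1_n = 0, Wᵀ·1_n = 0, and ‖(W ⊗ I_d)v − v‖² ≤ (1 − 1/χ)‖v‖² for all v ∈ (ℝ^d)^n with Pv = v. Let η, η' > 0, m, g ∈ (ℝ^d)^n, and set m' = (η/η')·(m + g − (W ⊗ I_d)(m + g)). Then ‖η·m‖_P² ≤ 2χ‖η·m‖_P² − 2χ‖η'·m'‖_P² + 4χ²‖η·g‖_P². -/

import Mathlib

open scoped BigOperators RealInnerProductSpace
open Matrix

noncomputable section

/-- The Kronecker product `W ⊗ I_d` as an `nd × nd` matrix. -/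
def kron (n d : ℕ) (W : Matrix (Fin n) (Fin n) ℝ) :
    Matrix (Fin n × Fin d) (Fin n × Fin d) ℝ :=
  Matrix.kroneckerMap (· * ·) W (1 : Matrix (Fin d) (Fin d) ℝ)

/-- `P = (I_n − (1/n)·1_n·1_nᵀ) ⊗ I_d`, the orthogonal projection onto `L⊥`. -/
def projMat (n d : ℕ) : Matrix (Fin n × Fin d) (Fin n × Fin d) ℝ :=
  Matrix.kroneckerMap (· * ·)
    ((1 : Matrix (Fin n) (Fin n) ℝ) - (n : ℝ)⁻¹ • Matrix.of (fun _ _ => (1 : ℝ)))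
    (1 : Matrix (Fin d) (Fin d) ℝ)

/-- Matrix-vector multiplication on the Euclidean space `(ℝ^d)^n ≃ ℝ^{nd}`. -/
def mulVecE {n d : ℕ} (M : Matrix (Fin n × Fin d) (Fin n × Fin d) ℝ)
    (v : EuclideanSpace ℝ (Fin n × Fin d)) : EuclideanSpace ℝ (Fin n × Fin d) :=
  (WithLp.equiv 2 (Fin n × Fin d → ℝ)).symm (M.mulVec ((WithLp.equiv 2 (Fin n × Fin d → ℝ)) v))

/-- `‖v‖_P = ‖Pv‖`. -/
def pnorm {n d : ℕ} (v : EuclideanSpace ℝ (Fin n × Fin d)) : ℝ :=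
  ‖mulVecE (projMat n d) v‖

lemma mulVecE_comp {n d : ℕ} (M N : Matrix (Fin n × Fin d) (Fin n × Fin d) ℝ)
    (v : EuclideanSpace ℝ (Fin n × Fin d)) :
    mulVecE M (mulVecE N v) = mulVecE (M * N) v := by
  simp [mulVecE, Matrix.mulVec_mulVec]

lemma mulVecE_add {n d : ℕ} (M : Matrix (Fin n × Fin d) (Fin n × Fin d) ℝ)
    (v w : EuclideanSpace ℝ (Fin n × Fin d)) :
    mulVecE M (v + w) = mulVecE M v + mulVecE M w := by
  ext i
  simp [mulVecE, Matrix.mulVec_add]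

lemma mulVecE_sub {n d : ℕ} (M : Matrix (Fin n × Fin d) (Fin n × Fin d) ℝ)
    (v w : EuclideanSpace ℝ (Fin n × Fin d)) :
    mulVecE M (v - w) = mulVecE M v - mulVecE M w := by
  ext i
  simp [mulVecE, Matrix.mulVec_sub]

lemma mulVecE_smul {n d : ℕ} (M : Matrix (Fin n × Fin d) (Fin n × Fin d) ℝ) (c : ℝ)
    (v : EuclideanSpace ℝ (Fin n × Fin d)) :
    mulVecE M (c • v) = c • mulVecE M v := by
  ext i
  simp [mulVecE, Matrix.mulVec_smul]

lemma Qidem (n : ℕ) (hn : 1 ≤ n) :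
    ((1 : Matrix (Fin n) (Fin n) ℝ) - (n : ℝ)⁻¹ • Matrix.of (fun _ _ => (1 : ℝ))) *
    ((1 : Matrix (Fin n) (Fin n) ℝ) - (n : ℝ)⁻¹ • Matrix.of (fun _ _ => (1 : ℝ))) =
    ((1 : Matrix (Fin n) (Fin n) ℝ) - (n : ℝ)⁻¹ • Matrix.of (fun _ _ => (1 : ℝ))) := by
  have hn0 : (n : ℝ) ≠ 0 := Nat.cast_ne_zero.mpr (by omega)
  ext i j
  simp [Matrix.mul_apply, Matrix.sub_apply, Matrix.one_apply, mul_sub, sub_mul,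
    Finset.sum_sub_distrib, Finset.mul_sum, Finset.sum_mul, apply_ite]
  field_simp
  simp

lemma QW (n : ℕ) (W : Matrix (Fin n) (Fin n) ℝ)
    (h2 : Wᵀ.mulVec (fun _ => 1) = 0) :
    ((1 : Matrix (Fin n) (Fin n) ℝ) - (n : ℝ)⁻¹ • Matrix.of (fun _ _ => (1 : ℝ))) * W = W := by
  have hJ : (Matrix.of (fun _ _ => (1 : ℝ)) : Matrix (Fin n) (Fin n) ℝ) * W = 0 := by
    ext i j
    have := congrFun h2 j
    simp [Matrix.mulVec, dotProduct] at this
    simp [Matrix.mul_apply, this]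
  rw [sub_mul, Matrix.one_mul, Matrix.smul_mul, hJ, smul_zero, sub_zero]

lemma WQ (n : ℕ) (W : Matrix (Fin n) (Fin n) ℝ)
    (h1 : W.mulVec (fun _ => 1) = 0) :
    W * ((1 : Matrix (Fin n) (Fin n) ℝ) - (n : ℝ)⁻¹ • Matrix.of (fun _ _ => (1 : ℝ))) = W := by
  have hJ : W * (Matrix.of (fun _ _ => (1 : ℝ)) : Matrix (Fin n) (Fin n) ℝ) = 0 := by
    ext i j
    have := congrFun h1 i
    simp [Matrix.mulVec, dotProduct] at this
    simp [Matrix.mul_apply, this]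
  rw [mul_sub, Matrix.mul_one, Matrix.mul_smul, hJ, smul_zero, sub_zero]

theorem stmt13 (n d : ℕ) (hn : 1 ≤ n) (hd : 1 ≤ d) (χ : ℝ) (hχ : 1 ≤ χ)
    (W : Matrix (Fin n) (Fin n) ℝ)
    (h1 : W.mulVec (fun _ => 1) = 0)
    (h2 : Wᵀ.mulVec (fun _ => 1) = 0)
    (hW : ∀ v : EuclideanSpace ℝ (Fin n × Fin d), mulVecE (projMat n d) v = v →
      ‖mulVecE (kron n d W) v - v‖ ^ 2 ≤ (1 - 1 / χ) * ‖v‖ ^ 2)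
    (η η' : ℝ) (hη : 0 < η) (hη' : 0 < η')
    (m g m' : EuclideanSpace ℝ (Fin n × Fin d))
    (hm' : m' = (η / η') • (m + g - mulVecE (kron n d W) (m + g))) :
    pnorm (η • m) ^ 2 ≤
      2 * χ * pnorm (η • m) ^ 2 - 2 * χ * pnorm (η' • m') ^ 2 + 4 * χ ^ 2 * pnorm (η • g) ^ 2 := by
  have hχ0 : (0:ℝ) < χ := lt_of_lt_of_le one_pos hχ
  -- matrix identities
  have kk : ∀ A B : Matrix (Fin n) (Fin n) ℝ,
      Matrix.kroneckerMap (· * ·) A (1 : Matrix (Fin d) (Fin d) ℝ) *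
        Matrix.kroneckerMap (· * ·) B (1 : Matrix (Fin d) (Fin d) ℝ) =
      Matrix.kroneckerMap (· * ·) (A * B) (1 : Matrix (Fin d) (Fin d) ℝ) := by
    intro A B
    rw [← Matrix.mul_kronecker_mul, Matrix.one_mul]
  have hPP : projMat n d * projMat n d = projMat n d := by
    unfold projMat
    rw [kk, Qidem n hn]
  have hPK : projMat n d * kron n d W = kron n d W := by
    unfold projMat kron
    rw [kk, QW n W h2]
  have hKP : kron n d W * projMat n d = kron n d W := by
    unfold projMat kron
    rw [kk, WQ n W h1]
  -- key vectors
  set a := mulVecE (projMat n d) (η • m) with ha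
  set b := mulVecE (projMat n d) (η • g) with hb
  set y := a + b with hy
  have hya : pnorm (η • m) = ‖a‖ := rfl
  have hyb : pnorm (η • g) = ‖b‖ := rfl
  have hyP : mulVecE (projMat n d) y = y := by
    rw [hy, mulVecE_add, ha, hb, mulVecE_comp, mulVecE_comp, hPP]
  -- η' • m' = η • (u - K u)
  have hη'0 : η' ≠ 0 := ne_of_gt hη'
  have hmm : η' • m' = η • (m + g) - mulVecE (kron n d W) (η • (m + g)) := by
    rw [hm', smul_smul, mul_div_assoc', mul_comm, mul_div_assoc, div_self hη'0, mul_one,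
      smul_sub, mulVecE_smul]
  have h3 : mulVecE (projMat n d) (η • (m + g)) = y := by
    rw [smul_add, mulVecE_add, ← ha, ← hb, hy]
  have h4 : mulVecE (kron n d W) y = mulVecE (kron n d W) (η • (m + g)) := by
    rw [← h3, mulVecE_comp, hKP]
  have hPm' : mulVecE (projMat n d) (η' • m') = y - mulVecE (kron n d W) y := by
    rw [hmm, mulVecE_sub, h3, mulVecE_comp, hPK, ← h4]
  have hpn : pnorm (η' • m') = ‖mulVecE (kron n d W) y - y‖ := by
    rw [pnorm, hPm', norm_sub_rev]
  have hKy : ‖mulVecE (kron n d W) y - y‖ ^ 2 ≤ (1 - 1 / χ) * ‖y‖ ^ 2 := hW y hyP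
  have hnorm : ‖y‖ ^ 2 = ‖a‖ ^ 2 + 2 * ⟪a, b⟫ + ‖b‖ ^ 2 := by
    rw [hy]; exact norm_add_sq_real a b
  have hip : ⟪a, b⟫ ≤ ‖a‖ * ‖b‖ := real_inner_le_norm a b
  have hA : (0:ℝ) ≤ ‖a‖ := norm_nonneg a
  have hB : (0:ℝ) ≤ ‖b‖ := norm_nonneg b
  have hKy2 : 2 * χ * ‖mulVecE (kron n d W) y - y‖ ^ 2 ≤ (2 * χ - 2) * ‖y‖ ^ 2 := by
    have h5 := mul_le_mul_of_nonneg_left hKy (show (0:ℝ) ≤ 2 * χ by linarith)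
    have he : 2 * χ * ((1 - 1 / χ) * ‖y‖ ^ 2) = (2 * χ - 2) * ‖y‖ ^ 2 := by
      field_simp
    linarith [he ▸ h5]
  rw [hya, hyb, hpn]
  nlinarith [hKy2, hnorm, sq_nonneg (‖a‖ - 2 * (χ - 1) * ‖b‖),
    mul_le_mul_of_nonneg_left hKy (le_of_lt (by linarith : (0:ℝ) < 2 * χ)),
    mul_le_mul_of_nonneg_left hip (by linarith : (0:ℝ) ≤ 4 * (χ - 1)),
    mul_nonneg (mul_nonneg hB hB) (by linarith : (0:ℝ) ≤ 6 * χ - 2),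
    sq_nonneg (‖mulVecE (kron n d W) y - y‖),
    mul_pos hχ0 hχ0]

end
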